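/- Variance of the first-order linearization of the logarithmic factorial effect estimator (Proposition 2, variance expression): suppose P_z > 0 for all z ∈ {0,1}^K, and for a nonempty subset ℓ ⊆ {1,…,K} define the linearized statistic η̃_ℓ = η_ℓ + 2^{−(K−1)} Σ_{z ∈ {0,1}^K} λ_{ℓ,z} (p_z − P_z)/P_z, where η_ℓ = 2^{−(K−1)} Σ_z λ_{ℓ,z} log P_z. Then under a completely randomized assignment, Var(η̃_ℓ) = 2^{−2(K−1)} ( Σ_{z} (N − N_z) S_z² / (N N_z P_z²) − (1/N) Σ_{z < z'} λ_{ℓ,z} λ_{ℓ,z'} (S_z² + S_{z'}² − S²_{z−z'})/(P_z P_{z'}) ), where the second sum is over unordered pairs of distinct treatments. -/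

import Mathlib

open Finset

/-- The finset of completely randomized assignments of `N` units to treatments in `J`
with group sizes `Nj`. -/
def assignments (N : ℕ) {J : Type*} [Fintype J] [DecidableEq J] (Nj : J → ℕ) :
    Finset (Fin N → J) :=
  Finset.univ.filter fun T => ∀ j, (Finset.univ.filter fun i => T i = j).card = Nj j

/-- Expectation with respect to the uniform distribution on completely randomized
assignments. -/
noncomputable def expect {N : ℕ} {J : Type*} [Fintype J] [DecidableEq J]
    (Nj : J → ℕ) (f : (Fin N → J) → ℝ) : ℝ :=
  (∑ T ∈ assignments N Nj, f T) / ((assignments N Nj).card : ℝ)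

/-- Variance with respect to the randomization distribution. -/
noncomputable def rvar {N : ℕ} {J : Type*} [Fintype J] [DecidableEq J]
    (Nj : J → ℕ) (f : (Fin N → J) → ℝ) : ℝ :=
  expect Nj fun T => (f T - expect Nj f) ^ 2

/-- Covariance with respect to the randomization distribution. -/
noncomputable def rcov {N : ℕ} {J : Type*} [Fintype J] [DecidableEq J]
    (Nj : J → ℕ) (f g : (Fin N → J) → ℝ) : ℝ :=
  expect Nj fun T => (f T - expect Nj f) * (g T - expect Nj g)

/-- Observed group mean `p_j` of treatment `j` under assignment `T`. -/
noncomputable def pObs {N : ℕ} {J : Type*} [DecidableEq J]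
    (Y : Fin N → J → ℝ) (Nj : J → ℕ) (j : J) (T : Fin N → J) : ℝ :=
  (∑ i ∈ Finset.univ.filter fun i => T i = j, Y i j) / (Nj j : ℝ)

/-- Population mean `P_j`. -/
noncomputable def Pmean {N : ℕ} {J : Type*} (Y : Fin N → J → ℝ) (j : J) : ℝ :=
  (∑ i, Y i j) / (N : ℝ)

/-- Population variance `S_j²`. -/
noncomputable def S2 {N : ℕ} {J : Type*} (Y : Fin N → J → ℝ) (j : J) : ℝ :=
  (∑ i, (Y i j - Pmean Y j) ^ 2) / ((N : ℝ) - 1)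

/-- Variance of unit-level differences `S²_{j-j'}`. -/
noncomputable def S2diff {N : ℕ} {J : Type*} (Y : Fin N → J → ℝ) (j j' : J) : ℝ :=
  (∑ i, (Y i j - Y i j' - (Pmean Y j - Pmean Y j')) ^ 2) / ((N : ℝ) - 1)

/-- Treatments in a `2^K` factorial experiment, indexed by `Fin (2^K)`: treatment `z`
corresponds to the element of `{0,1}^K` whose `k`-th coordinate is the `k`-th binary digit
of `z`. The contrast coefficient is `λ_{ℓ,z} = Π_{k∈ℓ} (2 z_k - 1)`. -/
def lam {K : ℕ} (ℓ : Finset (Fin K)) (z : Fin (2 ^ K)) : ℝ :=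
  ∏ k ∈ ℓ, (if Nat.testBit z.val k.val then 1 else -1)

set_option linter.unusedSectionVars false

section
section Counting
variable {N : ℕ} {J : Type*} [Fintype J] [DecidableEq J] {Nj : J → ℕ}

lemma mem_assignments {T : Fin N → J} :
    T ∈ assignments N Nj ↔ ∀ j, (univ.filter fun i => T i = j).card = Nj j := by
  simp [assignments]

lemma comp_perm_mem (σ : Equiv.Perm (Fin N)) {T : Fin N → J}
    (hT : T ∈ assignments N Nj) : (T ∘ σ) ∈ assignments N Nj := by
  rw [mem_assignments] at hT ⊢
  intro j
  rw [← hT j]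
  apply Finset.card_bij (fun a _ => σ a)
  · intro a ha; simp_all
  · intro a _ b _ h; exact σ.injective h
  · intro b hb; exact ⟨σ.symm b, by simp_all, by simp⟩

lemma exists_perm_two {α : Type*} [DecidableEq α] {i i' j j' : α} (h : i ≠ i') (h2 : j ≠ j') :
    ∃ σ : Equiv.Perm α, σ i = j ∧ σ i' = j' := by
  set σ1 := Equiv.swap i j with hσ1
  have hy : σ1 i' ≠ j := by
    intro hcon
    have : σ1 i' = σ1 i := by simpa [hσ1] using hcon
    exact h.symm (σ1.injective this)
  refine ⟨σ1.trans (Equiv.swap (σ1 i') j'), ?_, ?_⟩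
  · simp only [Equiv.trans_apply, hσ1, Equiv.swap_apply_left]
    rw [Equiv.swap_apply_of_ne_of_ne hy.symm h2]
  · simp only [Equiv.trans_apply, Equiv.swap_apply_left]

lemma countB_inner (T : Fin N → J) (hT : ∀ j, (univ.filter fun i => T i = j).card = Nj j)
    (z z' : J) :
    (univ.offDiag.filter fun p : Fin N × Fin N => T p.1 = z ∧ T p.2 = z').card
      = Nj z * Nj z' - (if z = z' then Nj z else 0) := by
  have h1 : univ.offDiag.filter (fun p : Fin N × Fin N => T p.1 = z ∧ T p.2 = z')
      = ((univ.filter fun i => T i = z) ×ˢ (univ.filter fun i => T i = z')).filter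
          fun p => ¬p.1 = p.2 := by
    ext p
    simp only [mem_filter, Finset.mem_offDiag, mem_univ, true_and, Finset.mem_product, ne_eq]
    tauto
  have h2 : (((univ.filter fun i => T i = z) ×ˢ (univ.filter fun i => T i = z')).filter
      fun p : Fin N × Fin N => p.1 = p.2)
      = ((univ.filter fun i => T i = z) ∩ (univ.filter fun i => T i = z')).image
          fun x => (x, x) := by
    ext ⟨a, b⟩
    simp only [mem_filter, Finset.mem_product, Finset.mem_image, Finset.mem_inter]
    constructor
    · rintro ⟨⟨ha, hb⟩, rfl⟩; exact ⟨a, ⟨ha, hb⟩, rfl⟩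
    · rintro ⟨x, hx, h⟩; cases h; exact ⟨hx, rfl⟩
  have h3 : ((univ.filter fun i => T i = z) ∩ (univ.filter fun i => T i = z')).card
      = if z = z' then Nj z else 0 := by
    by_cases hzz : z = z'
    · subst hzz; simp [hT z]
    · rw [if_neg hzz]
      convert Finset.card_empty
      ext i
      simp only [Finset.mem_inter, mem_filter, mem_univ, true_and, Finset.notMem_empty,
        iff_false, not_and]
      rintro rfl h; exact hzz h
  have h4 := Finset.card_filter_add_card_filter_not
    (s := (univ.filter fun i => T i = z) ×ˢ (univ.filter fun i => T i = z'))
    (p := fun p : Fin N × Fin N => p.1 = p.2)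
  rw [h1]
  clear h1
  have h5 : (((univ.filter fun i => T i = z) ×ˢ (univ.filter fun i => T i = z')).filter
      fun p : Fin N × Fin N => p.1 = p.2).card = if z = z' then Nj z else 0 := by
    rw [h2, Finset.card_image_of_injective _ (fun a b h => by cases h; rfl), h3]
  have h6 : ((univ.filter fun i => T i = z) ×ˢ (univ.filter fun i => T i = z')).card
      = Nj z * Nj z' := by
    rw [Finset.card_product, hT z, hT z']
  rw [h5, h6] at h4
  omega

lemma countB {i i' : Fin N} (hii : i ≠ i') (z z' : J) :
    (N * N - N) * ((assignments N Nj).filter fun T => T i = z ∧ T i' = z').card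
      = (Nj z * Nj z' - (if z = z' then Nj z else 0)) * (assignments N Nj).card := by
  have hconst : ∀ p : Fin N × Fin N, p ∈ (univ : Finset (Fin N)).offDiag →
      ((assignments N Nj).filter fun T => T p.1 = z ∧ T p.2 = z').card
        = ((assignments N Nj).filter fun T => T i = z ∧ T i' = z').card := by
    rintro ⟨a, a'⟩ hp
    have haa : a ≠ a' := by
      simpa using (Finset.mem_offDiag.1 hp).2.2
    obtain ⟨σ, hσ1, hσ2⟩ := exists_perm_two hii haa
    apply Finset.card_bij (fun T _ => T ∘ σ)
    · intro T hT
      simp only [mem_filter] at hT ⊢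
      refine ⟨comp_perm_mem _ hT.1, ?_, ?_⟩
      · rw [Function.comp_apply, hσ1]; exact hT.2.1
      · rw [Function.comp_apply, hσ2]; exact hT.2.2
    · intro a _ b _ hab
      funext x
      have := congrFun hab (σ.symm x)
      simpa using this
    · intro T hT
      simp only [mem_filter] at hT
      refine ⟨T ∘ σ.symm, Finset.mem_filter.2 ⟨comp_perm_mem _ hT.1, ?_, ?_⟩, ?_⟩
      · rw [Function.comp_apply, ← hσ1, Equiv.symm_apply_apply]; exact hT.2.1
      · rw [Function.comp_apply, ← hσ2, Equiv.symm_apply_apply]; exact hT.2.2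
      · funext x; simp [Function.comp]
  have hsum' : ∑ p ∈ (univ : Finset (Fin N)).offDiag,
      ((assignments N Nj).filter fun T => T p.1 = z ∧ T p.2 = z').card
      = (Nj z * Nj z' - (if z = z' then Nj z else 0)) * (assignments N Nj).card := by
    calc ∑ p ∈ (univ : Finset (Fin N)).offDiag,
        ((assignments N Nj).filter fun T => T p.1 = z ∧ T p.2 = z').card
        = ∑ p ∈ (univ : Finset (Fin N)).offDiag, ∑ T ∈ assignments N Nj,
            if T p.1 = z ∧ T p.2 = z' then 1 else 0 :=
          Finset.sum_congr rfl fun p _ => Finset.card_filter _ _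
      _ = ∑ T ∈ assignments N Nj, ∑ p ∈ (univ : Finset (Fin N)).offDiag,
            if T p.1 = z ∧ T p.2 = z' then 1 else 0 := Finset.sum_comm
      _ = ∑ T ∈ assignments N Nj, (Nj z * Nj z' - (if z = z' then Nj z else 0)) := by
          apply Finset.sum_congr rfl
          intro T hT
          rw [← Finset.card_filter]
          exact countB_inner T (mem_assignments.1 hT) z z'
      _ = _ := by rw [Finset.sum_const, smul_eq_mul, mul_comm]
  calc (N * N - N) * ((assignments N Nj).filter fun T => T i = z ∧ T i' = z').card
      = (univ : Finset (Fin N)).offDiag.card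
          * ((assignments N Nj).filter fun T => T i = z ∧ T i' = z').card := by
        rw [Finset.offDiag_card]; simp
    _ = ∑ p ∈ (univ : Finset (Fin N)).offDiag,
          ((assignments N Nj).filter fun T => T i = z ∧ T i' = z').card := by
        rw [Finset.sum_const, smul_eq_mul]
    _ = ∑ p ∈ (univ : Finset (Fin N)).offDiag,
          ((assignments N Nj).filter fun T => T p.1 = z ∧ T p.2 = z').card :=
        (Finset.sum_congr rfl fun p hp => (hconst p hp).symm)
    _ = _ := hsum'


lemma assignments_nonempty (hsum : ∑ j, Nj j = N) : (assignments N Nj).Nonempty := by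
  have hcard : Fintype.card (Σ j, Fin (Nj j)) = Fintype.card (Fin N) := by
    simp [Fintype.card_sigma, hsum]
  obtain e := Fintype.equivOfCardEq hcard
  refine ⟨fun i => (e.symm i).1, ?_⟩
  rw [mem_assignments]
  intro j
  have h1 : (univ.filter fun i : Fin N => (e.symm i).1 = j).card
      = (univ.filter fun s : Σ j, Fin (Nj j) => s.1 = j).card := by
    apply Finset.card_bij (fun a _ => e.symm a)
    · intro a ha; simp_all
    · intro a _ b _ h; exact e.symm.injective h
    · intro b hb; exact ⟨e b, by simp_all, by simp⟩
  rw [h1]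
  have h2 : (univ.filter fun s : Σ j, Fin (Nj j) => s.1 = j)
      = (univ : Finset (Fin (Nj j))).map ⟨fun x => ⟨j, x⟩, by intro a b h; simpa using h⟩ := by
    ext ⟨j', x⟩
    simp only [mem_filter, mem_univ, true_and, Finset.mem_map, Function.Embedding.coeFn_mk]
    constructor
    · rintro rfl; exact ⟨x, rfl⟩
    · rintro ⟨y, h⟩; exact (congrArg Sigma.fst h).symm
  simp [h2]

lemma countA (i : Fin N) (z : J) :
    N * ((assignments N Nj).filter fun T => T i = z).card
      = Nj z * (assignments N Nj).card := by
  have hconst : ∀ i' : Fin N,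
      ((assignments N Nj).filter fun T => T i' = z).card
        = ((assignments N Nj).filter fun T => T i = z).card := by
    intro i'
    apply Finset.card_bij (fun T _ => T ∘ Equiv.swap i i')
    · intro T hT
      simp only [mem_filter] at hT ⊢
      exact ⟨comp_perm_mem _ hT.1, by simp [hT.2]⟩
    · intro a ha b hb hab
      funext x
      have := congrFun hab ((Equiv.swap i i').symm x)
      simpa using this
    · intro T hT
      simp only [mem_filter] at hT
      refine ⟨T ∘ Equiv.swap i i', ?_, ?_⟩
      · simp only [mem_filter]
        exact ⟨comp_perm_mem _ hT.1, by simp [hT.2]⟩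
      · funext x
        simp [Function.comp]
    
  have hsum' : ∑ i' : Fin N, ((assignments N Nj).filter fun T => T i' = z).card
      = Nj z * (assignments N Nj).card := by
    calc ∑ i' : Fin N, ((assignments N Nj).filter fun T => T i' = z).card
        = ∑ i' : Fin N, ∑ T ∈ assignments N Nj, if T i' = z then 1 else 0 := by
          exact Finset.sum_congr rfl fun i' _ => Finset.card_filter _ _
      _ = ∑ T ∈ assignments N Nj, ∑ i' : Fin N, if T i' = z then 1 else 0 := Finset.sum_comm
      _ = ∑ T ∈ assignments N Nj, Nj z := by
          apply Finset.sum_congr rfl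
          intro T hT
          rw [← Finset.card_filter]
          exact mem_assignments.1 hT z
      _ = Nj z * (assignments N Nj).card := by rw [Finset.sum_const, smul_eq_mul, mul_comm]
  calc N * ((assignments N Nj).filter fun T => T i = z).card
      = ∑ i' : Fin N, ((assignments N Nj).filter fun T => T i = z).card := by
        simp [Finset.sum_const, mul_comm]
    _ = ∑ i' : Fin N, ((assignments N Nj).filter fun T => T i' = z).card := by
        exact (Finset.sum_congr rfl fun i' _ => (hconst i').symm)
    _ = Nj z * (assignments N Nj).card := hsum'

end Counting

section Expect
variable {N : ℕ} {J : Type*} [Fintype J] [DecidableEq J] {Nj : J → ℕ}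

lemma expect_congr {f g : (Fin N → J) → ℝ} (h : ∀ T, f T = g T) :
    _root_.expect Nj f = _root_.expect Nj g := by
  unfold _root_.expect
  rw [Finset.sum_congr rfl fun T _ => h T]

lemma expect_const (h : (assignments N Nj).Nonempty) (c : ℝ) :
    _root_.expect (N := N) Nj (fun _ => c) = c := by
  unfold _root_.expect
  rw [Finset.sum_const, nsmul_eq_mul]
  have hc : ((assignments N Nj).card : ℝ) ≠ 0 := by
    exact_mod_cast Finset.card_ne_zero_of_mem h.choose_spec
  rw [mul_comm, mul_div_assoc, div_self hc, mul_one]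

lemma expect_add (f g : (Fin N → J) → ℝ) :
    _root_.expect Nj (fun T => f T + g T) = _root_.expect Nj f + _root_.expect Nj g := by
  unfold _root_.expect
  rw [Finset.sum_add_distrib, add_div]

lemma expect_sub (f g : (Fin N → J) → ℝ) :
    _root_.expect Nj (fun T => f T - g T) = _root_.expect Nj f - _root_.expect Nj g := by
  unfold _root_.expect
  rw [Finset.sum_sub_distrib, sub_div]

lemma expect_const_mul (c : ℝ) (f : (Fin N → J) → ℝ) :
    _root_.expect Nj (fun T => c * f T) = c * _root_.expect Nj f := by
  unfold _root_.expect
  rw [← Finset.mul_sum, mul_div_assoc]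

lemma expect_finset_sum {ι : Type*} (s : Finset ι) (f : ι → (Fin N → J) → ℝ) :
    _root_.expect Nj (fun T => ∑ x ∈ s, f x T) = ∑ x ∈ s, _root_.expect Nj (f x) := by
  unfold _root_.expect
  rw [Finset.sum_comm, Finset.sum_div]

lemma rcov_eq (h : (assignments N Nj).Nonempty) (f g : (Fin N → J) → ℝ) :
    rcov Nj f g = _root_.expect Nj (fun T => f T * g T) - _root_.expect Nj f * _root_.expect Nj g := by
  unfold rcov
  have h1 : ∀ T : Fin N → J, (f T - _root_.expect Nj f) * (g T - _root_.expect Nj g)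
      = f T * g T - _root_.expect Nj f * g T - _root_.expect Nj g * f T + _root_.expect Nj f * _root_.expect Nj g := by
    intro T; ring
  rw [expect_congr h1]
  have h2 : _root_.expect Nj (fun T => f T * g T - _root_.expect Nj f * g T - _root_.expect Nj g * f T
      + _root_.expect Nj f * _root_.expect Nj g)
      = _root_.expect Nj (fun T => f T * g T) - _root_.expect Nj f * _root_.expect Nj g
        - _root_.expect Nj g * _root_.expect Nj f + _root_.expect Nj f * _root_.expect Nj g := by
    rw [show (fun T => f T * g T - _root_.expect Nj f * g T - _root_.expect Nj g * f T
        + _root_.expect Nj f * _root_.expect Nj g)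
      = fun T => ((f T * g T - _root_.expect Nj f * g T) - _root_.expect Nj g * f T)
        + _root_.expect Nj f * _root_.expect Nj g from rfl]
    rw [expect_add, expect_sub, expect_sub, expect_const_mul, expect_const_mul,
      expect_const h]
  rw [h2]; ring

lemma rcov_comm (f g : (Fin N → J) → ℝ) : rcov Nj f g = rcov Nj g f := by
  unfold rcov
  exact expect_congr fun T => by ring

end Expect

section Moments
variable {N : ℕ} {J : Type*} [Fintype J] [DecidableEq J] {Nj : J → ℕ}

lemma cardA_real (hN : 1 ≤ N) (i : Fin N) (z : J) :
    (((assignments N Nj).filter fun T => T i = z).card : ℝ)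
      = Nj z * (assignments N Nj).card / N := by
  have hn : (N : ℝ) ≠ 0 := Nat.cast_ne_zero.2 (by omega)
  have h := countA (Nj := Nj) i z
  have h' := congrArg (Nat.cast : ℕ → ℝ) h
  push_cast at h'
  rw [eq_div_iff hn]
  linarith

lemma cardB_real (hN : 2 ≤ N) (hpos : ∀ j, 1 ≤ Nj j) {i i' : Fin N} (hii : i ≠ i')
    (z z' : J) :
    (((assignments N Nj).filter fun T => T i = z ∧ T i' = z').card : ℝ)
      = (Nj z * Nj z' - if z = z' then (Nj z : ℝ) else 0) * (assignments N Nj).card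
          / ((N : ℝ) * ((N : ℝ) - 1)) := by
  have hn : (N : ℝ) ≠ 0 := Nat.cast_ne_zero.2 (by omega)
  have hn1 : (N : ℝ) - 1 ≠ 0 := by
    have : (2 : ℝ) ≤ (N : ℝ) := by exact_mod_cast hN
    linarith
  have hNN : N ≤ N * N := Nat.le_mul_of_pos_left N (by omega)
  have h := countB (Nj := Nj) hii z z'
  have h' := congrArg (Nat.cast : ℕ → ℝ) h
  clear h
  rw [eq_div_iff (mul_ne_zero hn hn1)]
  by_cases hzz : z = z'
  · subst hzz
    have hle : Nj z ≤ Nj z * Nj z := Nat.le_mul_of_pos_left (Nj z) (Nat.lt_of_lt_of_le Nat.zero_lt_one (hpos z))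
    rw [if_pos rfl] at *
    push_cast [Nat.cast_sub hNN, Nat.cast_sub hle] at h' ⊢
    nlinarith [h']
  · rw [if_neg hzz] at *
    simp only [if_neg hzz, Nat.sub_zero] at h'
    push_cast [Nat.cast_sub hNN] at h' ⊢
    nlinarith [h']

variable (Y : Fin N → J → ℝ)

lemma expect_pObs (hN : 1 ≤ N) (hpos : ∀ j, 1 ≤ Nj j) (hsum : ∑ j, Nj j = N) (z : J) :
    _root_.expect Nj (pObs Y Nj z) = Pmean Y z := by
  have hne := assignments_nonempty hsum
  have hn : (N : ℝ) ≠ 0 := Nat.cast_ne_zero.2 (by omega)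
  have hnz : (Nj z : ℝ) ≠ 0 := Nat.cast_ne_zero.2 (by have := hpos z; omega)
  have hM : ((assignments N Nj).card : ℝ) ≠ 0 := by
    exact_mod_cast Finset.card_ne_zero_of_mem hne.choose_spec
  have key : ∑ T ∈ assignments N Nj, ∑ i ∈ univ.filter (fun i => T i = z), Y i z
      = (∑ i, Y i z) * (Nj z * (assignments N Nj).card / N) := by
    calc ∑ T ∈ assignments N Nj, ∑ i ∈ univ.filter (fun i => T i = z), Y i z
        = ∑ T ∈ assignments N Nj, ∑ i, if T i = z then Y i z else 0 :=
          Finset.sum_congr rfl fun T _ => Finset.sum_filter _ _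
      _ = ∑ i, ∑ T ∈ assignments N Nj, if T i = z then Y i z else 0 := Finset.sum_comm
      _ = ∑ i, Y i z * (Nj z * (assignments N Nj).card / N) := by
          apply Finset.sum_congr rfl
          intro i _
          rw [← Finset.sum_filter, Finset.sum_const, nsmul_eq_mul, cardA_real hN i z,
            mul_comm]
      _ = _ := by rw [← Finset.sum_mul]
  unfold _root_.expect pObs
  rw [← Finset.sum_div, key]
  unfold Pmean
  field_simp

lemma ite_mul_ite_zero (a b : Prop) [Decidable a] [Decidable b] (x y : ℝ) :
    (if a then x else 0) * (if b then y else 0) = if a ∧ b then x * y else 0 := by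
  by_cases ha : a <;> by_cases hb : b <;> simp [ha, hb]

lemma expect_pObs_mul (hN : 2 ≤ N) (hpos : ∀ j, 1 ≤ Nj j) (hsum : ∑ j, Nj j = N)
    (z z' : J) :
    _root_.expect Nj (fun T => pObs Y Nj z T * pObs Y Nj z' T)
      = ((if z = z' then (1 : ℝ) else 0) * (Nj z * (assignments N Nj).card / N)
            * (∑ i, Y i z * Y i z')
          + (Nj z * Nj z' - if z = z' then (Nj z : ℝ) else 0) * (assignments N Nj).card
              / ((N : ℝ) * ((N : ℝ) - 1))
            * ((∑ i, Y i z) * (∑ i, Y i z') - ∑ i, Y i z * Y i z'))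
        / ((Nj z : ℝ) * (Nj z' : ℝ)) / ((assignments N Nj).card : ℝ) := by
  have hN1 : 1 ≤ N := by omega
  have key : ∑ T ∈ assignments N Nj, pObs Y Nj z T * pObs Y Nj z' T
      = ((if z = z' then (1 : ℝ) else 0) * (Nj z * (assignments N Nj).card / N)
            * (∑ i, Y i z * Y i z')
          + (Nj z * Nj z' - if z = z' then (Nj z : ℝ) else 0) * (assignments N Nj).card
              / ((N : ℝ) * ((N : ℝ) - 1))
            * ((∑ i, Y i z) * (∑ i, Y i z') - ∑ i, Y i z * Y i z'))
        / ((Nj z : ℝ) * (Nj z' : ℝ)) := by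
    have step1 : ∀ T, pObs Y Nj z T * pObs Y Nj z' T
        = (∑ i, ∑ i', if T i = z ∧ T i' = z' then Y i z * Y i' z' else 0)
            / ((Nj z : ℝ) * (Nj z' : ℝ)) := by
      intro T
      unfold pObs
      rw [div_mul_div_comm]
      congr 1
      rw [Finset.sum_filter, Finset.sum_filter, Finset.sum_mul_sum]
      exact Finset.sum_congr rfl fun i _ => Finset.sum_congr rfl fun i' _ =>
        ite_mul_ite_zero _ _ _ _
    rw [Finset.sum_congr rfl fun T _ => step1 T, ← Finset.sum_div]
    congr 1
    have step2 : ∑ T ∈ assignments N Nj, ∑ i, ∑ i',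
        (if T i = z ∧ T i' = z' then Y i z * Y i' z' else 0)
        = ∑ i : Fin N, ∑ i' : Fin N, Y i z * Y i' z'
            * (((assignments N Nj).filter fun T => T i = z ∧ T i' = z').card : ℝ) := by
      rw [Finset.sum_comm]
      apply Finset.sum_congr rfl
      intro i _
      rw [Finset.sum_comm]
      apply Finset.sum_congr rfl
      intro i' _
      rw [← Finset.sum_filter, Finset.sum_const, nsmul_eq_mul, mul_comm]
    rw [step2]
    have hDii : ∀ i : Fin N,
        (((assignments N Nj).filter fun T => T i = z ∧ T i = z').card : ℝ)
          = (if z = z' then (1 : ℝ) else 0) * (Nj z * (assignments N Nj).card / N) := by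
      intro i
      by_cases hzz : z = z'
      · subst hzz
        rw [if_pos rfl, one_mul,
          show ((assignments N Nj).filter fun T => T i = z ∧ T i = z)
              = ((assignments N Nj).filter fun T => T i = z) from
            Finset.filter_congr fun T _ => by simp]
        exact cardA_real hN1 i z
      · rw [if_neg hzz, zero_mul]
        norm_cast
        rw [Finset.card_eq_zero, Finset.filter_eq_empty_iff]
        rintro T -
        rintro ⟨rfl, h⟩
        exact hzz h
    have hsplit : ∀ i : Fin N, ∑ i' : Fin N, Y i z * Y i' z'
          * (((assignments N Nj).filter fun T => T i = z ∧ T i' = z').card : ℝ)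
        = Y i z * Y i z' * ((if z = z' then (1 : ℝ) else 0)
              * (Nj z * (assignments N Nj).card / N))
          + (Y i z * (∑ i', Y i' z') - Y i z * Y i z')
              * ((Nj z * Nj z' - if z = z' then (Nj z : ℝ) else 0)
                  * (assignments N Nj).card / ((N : ℝ) * ((N : ℝ) - 1))) := by
      intro i
      rw [← Finset.add_sum_erase _ _ (Finset.mem_univ i), hDii i]
      congr 1
      have : ∀ i' ∈ univ.erase i, Y i z * Y i' z'
            * (((assignments N Nj).filter fun T => T i = z ∧ T i' = z').card : ℝ)
          = Y i z * Y i' z' * ((Nj z * Nj z' - if z = z' then (Nj z : ℝ) else 0)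
              * (assignments N Nj).card / ((N : ℝ) * ((N : ℝ) - 1))) := by
        intro i' hi'
        have hne : i ≠ i' := (Finset.ne_of_mem_erase hi').symm
        rw [cardB_real hN hpos hne z z']
      rw [Finset.sum_congr rfl this, ← Finset.sum_mul]
      congr 1
      rw [Finset.sum_erase_eq_sub (Finset.mem_univ i), ← Finset.mul_sum]
    rw [Finset.sum_congr rfl fun i _ => hsplit i]
    rw [Finset.sum_add_distrib, ← Finset.sum_mul, ← Finset.sum_mul]
    congr 1
    · ring
    · rw [Finset.sum_sub_distrib, ← Finset.sum_mul]
      ring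
  unfold _root_.expect
  rw [key]

end Moments


section Cov
variable {N : ℕ} {J : Type*} [Fintype J] [DecidableEq J] {Nj : J → ℕ} (Y : Fin N → J → ℝ)

lemma rcov_pObs (hN : 2 ≤ N) (hpos : ∀ j, 1 ≤ Nj j) (hsum : ∑ j, Nj j = N) (z z' : J) :
    rcov Nj (pObs Y Nj z) (pObs Y Nj z')
      = if z = z'
        then ((N : ℝ) - Nj z) / ((N : ℝ) * Nj z)
            * (((∑ i, Y i z * Y i z) - (∑ i, Y i z) * (∑ i, Y i z) / N) / ((N : ℝ) - 1))
        else -((((∑ i, Y i z * Y i z') - (∑ i, Y i z) * (∑ i, Y i z') / N) / ((N : ℝ) - 1))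
            / N) := by
  have hne := assignments_nonempty hsum
  have hn : (N : ℝ) ≠ 0 := Nat.cast_ne_zero.2 (by omega)
  have hn1 : (N : ℝ) - 1 ≠ 0 := by
    have h2 : (2 : ℝ) ≤ (N : ℝ) := by exact_mod_cast hN
    linarith
  have hM : ((assignments N Nj).card : ℝ) ≠ 0 := by
    exact_mod_cast Finset.card_ne_zero_of_mem hne.choose_spec
  have hnz : ∀ j, (Nj j : ℝ) ≠ 0 :=
    fun j => Nat.cast_ne_zero.2 (Nat.pos_iff_ne_zero.mp (hpos j))
  rw [rcov_eq hne, expect_pObs Y (by omega) hpos hsum, expect_pObs Y (by omega) hpos hsum,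
    expect_pObs_mul Y hN hpos hsum]
  unfold Pmean
  by_cases hzz : z = z'
  · subst hzz
    rw [if_pos rfl, if_pos rfl, if_pos rfl]
    have hnzz := hnz z
    generalize (∑ i, Y i z * Y i z : ℝ) = Q
    generalize (∑ i, Y i z : ℝ) = A
    generalize ((assignments N Nj).card : ℝ) = M at hM ⊢
    generalize ((Nj z : ℝ)) = nz at hnzz ⊢
    generalize ((N : ℝ)) = n at hn hn1 ⊢
    field_simp
    ring
  · rw [if_neg hzz, if_neg hzz, if_neg hzz]
    have hnzz := hnz z
    have hnzz' := hnz z'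
    generalize (∑ i, Y i z * Y i z' : ℝ) = Q
    generalize (∑ i, Y i z : ℝ) = A
    generalize (∑ i, Y i z' : ℝ) = A'
    generalize ((assignments N Nj).card : ℝ) = M at hM ⊢
    generalize ((Nj z : ℝ)) = nz at hnzz ⊢
    generalize ((Nj z' : ℝ)) = nz' at hnzz' ⊢
    generalize ((N : ℝ)) = n at hn hn1 ⊢
    field_simp
    ring

lemma sum_centered_mul (hN : 1 ≤ N) (z z' : J) :
    ∑ i, (Y i z - Pmean Y z) * (Y i z' - Pmean Y z')
      = (∑ i, Y i z * Y i z') - (∑ i, Y i z) * (∑ i, Y i z') / N := by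
  have hn : (N : ℝ) ≠ 0 := Nat.cast_ne_zero.2 (by omega)
  have h1 : ∀ i : Fin N, (Y i z - Pmean Y z) * (Y i z' - Pmean Y z')
      = Y i z * Y i z' - Pmean Y z * Y i z' - Pmean Y z' * Y i z
        + Pmean Y z * Pmean Y z' := fun i => by ring
  rw [Finset.sum_congr rfl fun i _ => h1 i, Finset.sum_add_distrib, Finset.sum_sub_distrib,
    Finset.sum_sub_distrib, ← Finset.mul_sum, ← Finset.mul_sum, Finset.sum_const,
    Finset.card_univ, Fintype.card_fin, nsmul_eq_mul]
  unfold Pmean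
  field_simp
  ring

lemma S2_eq (hN : 1 ≤ N) (z : J) :
    S2 Y z = ((∑ i, Y i z * Y i z) - (∑ i, Y i z) * (∑ i, Y i z) / N) / ((N : ℝ) - 1) := by
  unfold S2
  rw [← sum_centered_mul Y hN z z]
  congr 1
  exact Finset.sum_congr rfl fun i _ => pow_two _

lemma S2_cross (hN : 1 ≤ N) (z z' : J) :
    S2 Y z + S2 Y z' - S2diff Y z z'
      = 2 * (((∑ i, Y i z * Y i z') - (∑ i, Y i z) * (∑ i, Y i z') / N) / ((N : ℝ) - 1)) := by
  unfold S2 S2diff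
  rw [← add_div, div_sub_div_same, ← mul_div_assoc]
  have key : ∀ i : Fin N, (Y i z - Pmean Y z) ^ 2 + (Y i z' - Pmean Y z') ^ 2
      - (Y i z - Y i z' - (Pmean Y z - Pmean Y z')) ^ 2
      = 2 * ((Y i z - Pmean Y z) * (Y i z' - Pmean Y z')) := fun i => by ring
  congr 1
  calc (∑ i, (Y i z - Pmean Y z) ^ 2) + (∑ i, (Y i z' - Pmean Y z') ^ 2)
        - ∑ i, (Y i z - Y i z' - (Pmean Y z - Pmean Y z')) ^ 2
      = ∑ i, ((Y i z - Pmean Y z) ^ 2 + (Y i z' - Pmean Y z') ^ 2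
          - (Y i z - Y i z' - (Pmean Y z - Pmean Y z')) ^ 2) := by
        rw [Finset.sum_sub_distrib, Finset.sum_add_distrib]
    _ = ∑ i, 2 * ((Y i z - Pmean Y z) * (Y i z' - Pmean Y z')) :=
        Finset.sum_congr rfl fun i _ => key i
    _ = 2 * ∑ i, (Y i z - Pmean Y z) * (Y i z' - Pmean Y z') := by rw [Finset.mul_sum]
    _ = _ := by rw [sum_centered_mul Y hN z z']

lemma rvar_linear_combo (hN : 2 ≤ N) (hpos : ∀ j, 1 ≤ Nj j) (hsum : ∑ j, Nj j = N)
    (hP : ∀ j, Pmean Y j ≠ 0) (c : ℝ) (w : J → ℝ) :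
    rvar Nj (fun T => c + ∑ z, w z * ((pObs Y Nj z T - Pmean Y z) / Pmean Y z))
      = ∑ z, ∑ z', (w z * w z' / (Pmean Y z * Pmean Y z'))
          * rcov Nj (pObs Y Nj z) (pObs Y Nj z') := by
  have hne := assignments_nonempty hsum
  have hEp : ∀ j : J, _root_.expect Nj (pObs Y Nj j) = Pmean Y j :=
    fun j => expect_pObs Y (by omega) hpos hsum j
  have hEu : ∀ j : J, _root_.expect Nj
      (fun T => w j * ((pObs Y Nj j T - Pmean Y j) / Pmean Y j)) = 0 := by
    intro j
    have h1 : ∀ T : Fin N → J, w j * ((pObs Y Nj j T - Pmean Y j) / Pmean Y j)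
        = (w j / Pmean Y j) * pObs Y Nj j T - w j := by
      intro T; field_simp [hP j]
    rw [expect_congr h1, expect_sub, expect_const_mul, hEp, _root_.expect_const hne]
    rw [div_mul_cancel₀ _ (hP j), sub_self]
  have hEf : _root_.expect Nj
      (fun T => c + ∑ z, w z * ((pObs Y Nj z T - Pmean Y z) / Pmean Y z)) = c := by
    rw [expect_add (fun _ => c), _root_.expect_const hne,
      expect_finset_sum univ (fun z T => w z * ((pObs Y Nj z T - Pmean Y z) / Pmean Y z)),
      Finset.sum_congr rfl fun z _ => hEu z, Finset.sum_const_zero, add_zero]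
  have hEuu : ∀ z z' : J, _root_.expect Nj (fun T =>
      ((pObs Y Nj z T - Pmean Y z) / Pmean Y z)
        * ((pObs Y Nj z' T - Pmean Y z') / Pmean Y z'))
      = (1 / (Pmean Y z * Pmean Y z')) * rcov Nj (pObs Y Nj z) (pObs Y Nj z') := by
    intro z z'
    have hc : rcov Nj (pObs Y Nj z) (pObs Y Nj z')
        = _root_.expect Nj (fun T => (pObs Y Nj z T - Pmean Y z)
            * (pObs Y Nj z' T - Pmean Y z')) := by
      unfold rcov
      rw [hEp z, hEp z']
    rw [hc, ← expect_const_mul]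
    exact expect_congr fun T => by ring
  unfold rvar
  rw [hEf]
  have hpt : ∀ T : Fin N → J,
      (c + (∑ z, w z * ((pObs Y Nj z T - Pmean Y z) / Pmean Y z)) - c) ^ 2
      = ∑ z, ∑ z', (w z * w z') * (((pObs Y Nj z T - Pmean Y z) / Pmean Y z)
          * ((pObs Y Nj z' T - Pmean Y z') / Pmean Y z')) := by
    intro T
    rw [add_sub_cancel_left, pow_two, Finset.sum_mul_sum]
    exact Finset.sum_congr rfl fun z _ => Finset.sum_congr rfl fun z' _ => by ring
  rw [expect_congr hpt, expect_finset_sum]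
  apply Finset.sum_congr rfl
  intro z _
  rw [expect_finset_sum]
  apply Finset.sum_congr rfl
  intro z' _
  rw [expect_const_mul, hEuu z z']
  field_simp

lemma rcov_comm' (f g : (Fin N → J) → ℝ) : rcov Nj f g = rcov Nj g f := rcov_comm f g

end Cov

lemma double_sum_split {ι : Type*} [Fintype ι] [LinearOrder ι] (g : ι → ι → ℝ)
    (hsymm : ∀ a b, g a b = g b a) :
    ∑ a, ∑ b, g a b
      = (∑ a, g a a) + 2 * ∑ a, ∑ b ∈ univ.filter (fun b => a < b), g a b := by
  have tri : ∀ a b : ι, g a b = (if b = a then g a b else 0) + (if a < b then g a b else 0)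
      + (if b < a then g a b else 0) := by
    intro a b
    rcases lt_trichotomy a b with h | h | h
    · rw [if_neg h.ne', if_pos h, if_neg (asymm h), zero_add, add_zero]
    · subst h
      rw [if_pos rfl, if_neg (lt_irrefl a), add_zero, add_zero]
    · rw [if_neg h.ne, if_neg (asymm h), if_pos h, zero_add, zero_add]
  have h1 : ∑ a, ∑ b, g a b
      = ((∑ a, ∑ b, if b = a then g a b else 0) + ∑ a, ∑ b, if a < b then g a b else 0)
        + ∑ a, ∑ b, if b < a then g a b else 0 := by
    rw [← Finset.sum_add_distrib, ← Finset.sum_add_distrib]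
    apply Finset.sum_congr rfl; intro a _
    rw [← Finset.sum_add_distrib, ← Finset.sum_add_distrib]
    exact Finset.sum_congr rfl fun b _ => tri a b
  rw [h1]
  have h2 : ∀ a : ι, (∑ b, if b = a then g a b else 0) = g a a := by
    intro a
    rw [Finset.sum_ite_eq' univ a (g a)]
    simp
  have h3 : (∑ a, ∑ b, if b < a then g a b else 0)
      = ∑ a, ∑ b, if a < b then g a b else 0 := by
    rw [Finset.sum_comm]
    apply Finset.sum_congr rfl; intro a _
    apply Finset.sum_congr rfl; intro b _
    by_cases h : a < b <;> simp [h, hsymm a b]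
  have h4 : ∀ a : ι, (∑ b, if a < b then g a b else 0)
      = ∑ b ∈ univ.filter (fun b => a < b), g a b := fun a => (Finset.sum_filter _ _).symm
  rw [h3, Finset.sum_congr rfl fun a _ => h2 a, Finset.sum_congr rfl fun a _ => h4 a]
  ring

lemma lam_sq {K : ℕ} (ℓ : Finset (Fin K)) (z : Fin (2 ^ K)) : lam ℓ z * lam ℓ z = 1 := by
  unfold lam
  rw [← Finset.prod_mul_distrib]
  apply Finset.prod_eq_one
  intro k _
  split_ifs <;> norm_num
end

/-- Variance of the first-order linearization of the logarithmic factorial effect estimator: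
if `P_z > 0` for all `z` then, with
`η̃_ℓ = η_ℓ + 2^{-(K-1)} Σ_z λ_{ℓ,z} (p_z - P_z)/P_z` where
`η_ℓ = 2^{-(K-1)} Σ_z λ_{ℓ,z} log P_z`,
`Var(η̃_ℓ) = 2^{-2(K-1)} ( Σ_z (N-N_z) S_z² / (N N_z P_z²)
  - (1/N) Σ_{z<z'} λ_{ℓ,z} λ_{ℓ,z'} (S_z² + S_{z'}² - S²_{z-z'})/(P_z P_{z'}) )`. -/
theorem rvar_linearized_logFE {N K : ℕ} (hN : 2 ≤ N)
    (Y : Fin N → Fin (2 ^ K) → ℝ) (Nj : Fin (2 ^ K) → ℕ)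
    (hpos : ∀ z, 1 ≤ Nj z) (hsum : ∑ z, Nj z = N)
    (hP : ∀ z, 0 < Pmean Y z)
    (ℓ : Finset (Fin K)) (hℓ : ℓ.Nonempty) :
    rvar Nj (fun T =>
        (1 / 2 ^ (K - 1)) * ∑ z, lam ℓ z * Real.log (Pmean Y z)
          + (1 / 2 ^ (K - 1)) * ∑ z, lam ℓ z * ((pObs Y Nj z T - Pmean Y z) / Pmean Y z)) =
      (1 / 2 ^ (2 * (K - 1))) *
        ((∑ z, ((N : ℝ) - (Nj z : ℝ)) * S2 Y z / ((N : ℝ) * (Nj z : ℝ) * (Pmean Y z) ^ 2))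
          - (1 / (N : ℝ)) * ∑ z, ∑ z' ∈ Finset.univ.filter (fun z' => z < z'),
              lam ℓ z * lam ℓ z' * ((S2 Y z + S2 Y z' - S2diff Y z z') /
                (Pmean Y z * Pmean Y z'))) := by
  have hP' : ∀ z, Pmean Y z ≠ 0 := fun z => (hP z).ne'
  have hn : (N : ℝ) ≠ 0 := Nat.cast_ne_zero.2 (by omega)
  have hn1 : (N : ℝ) - 1 ≠ 0 := by
    have h2 : (2 : ℝ) ≤ (N : ℝ) := by exact_mod_cast hN
    linarith
  have hnz : ∀ z, (Nj z : ℝ) ≠ 0 :=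
    fun z => Nat.cast_ne_zero.2 (Nat.one_le_iff_ne_zero.mp (hpos z))
  have ha2 : ((1 : ℝ) / 2 ^ (K - 1)) * ((1 : ℝ) / 2 ^ (K - 1)) = 1 / 2 ^ (2 * (K - 1)) := by
    rw [div_mul_div_comm, one_mul, ← pow_add, two_mul]
  set w : Fin (2 ^ K) → ℝ := fun z => (1 / 2 ^ (K - 1) : ℝ) * lam ℓ z with hw
  have hfeq : (fun T : Fin N → Fin (2 ^ K) =>
      (1 / 2 ^ (K - 1) : ℝ) * ∑ z, lam ℓ z * Real.log (Pmean Y z)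
        + (1 / 2 ^ (K - 1) : ℝ) * ∑ z, lam ℓ z * ((pObs Y Nj z T - Pmean Y z) / Pmean Y z))
      = (fun T => ((1 / 2 ^ (K - 1) : ℝ) * ∑ z, lam ℓ z * Real.log (Pmean Y z))
        + ∑ z, w z * ((pObs Y Nj z T - Pmean Y z) / Pmean Y z)) := by
    funext T
    congr 1
    rw [Finset.mul_sum]
    exact Finset.sum_congr rfl fun z _ => by simp only [hw]; ring
  rw [hfeq, rvar_linear_combo Y hN hpos hsum hP' _ w]
  have hsym : ∀ a b : Fin (2 ^ K),
      (w a * w b / (Pmean Y a * Pmean Y b)) * rcov Nj (pObs Y Nj a) (pObs Y Nj b)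
      = (w b * w a / (Pmean Y b * Pmean Y a)) * rcov Nj (pObs Y Nj b) (pObs Y Nj a) := by
    intro a b
    rw [rcov_comm]
    ring
  have hsplit := double_sum_split (fun z z' => (w z * w z' / (Pmean Y z * Pmean Y z'))
    * rcov Nj (pObs Y Nj z) (pObs Y Nj z')) hsym
  rw [hsplit]
  have hdiag : (∑ z : Fin (2 ^ K), (w z * w z / (Pmean Y z * Pmean Y z))
        * rcov Nj (pObs Y Nj z) (pObs Y Nj z))
      = (1 / 2 ^ (2 * (K - 1)))
          * ∑ z, ((N : ℝ) - Nj z) * S2 Y z / ((N : ℝ) * Nj z * Pmean Y z ^ 2) := by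
    rw [Finset.mul_sum]
    apply Finset.sum_congr rfl
    intro z _
    rw [rcov_pObs Y hN hpos hsum z z, if_pos rfl, ← S2_eq Y (by omega) z]
    simp only [hw]
    have hww : (1 / 2 ^ (K - 1) : ℝ) * lam ℓ z * ((1 / 2 ^ (K - 1) : ℝ) * lam ℓ z)
        = 1 / 2 ^ (2 * (K - 1)) := by
      calc (1 / 2 ^ (K - 1) : ℝ) * lam ℓ z * ((1 / 2 ^ (K - 1) : ℝ) * lam ℓ z)
          = ((1 / 2 ^ (K - 1) : ℝ) * (1 / 2 ^ (K - 1))) * (lam ℓ z * lam ℓ z) := by ring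
        _ = _ := by rw [lam_sq, mul_one, ha2]
    rw [hww, pow_two]
    have hc : ((2 : ℝ) ^ (2 * (K - 1))) ≠ 0 := by positivity
    field_simp
  have hoff : ∀ z z' : Fin (2 ^ K), z < z' →
      2 * ((w z * w z' / (Pmean Y z * Pmean Y z'))
          * rcov Nj (pObs Y Nj z) (pObs Y Nj z'))
        = ((1 / 2 ^ (2 * (K - 1))) * (-(1 / (N : ℝ))))
            * (lam ℓ z * lam ℓ z' * ((S2 Y z + S2 Y z' - S2diff Y z z')
                / (Pmean Y z * Pmean Y z'))) := by
    intro z z' hlt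
    rw [rcov_pObs Y hN hpos hsum z z', if_neg hlt.ne, S2_cross Y (by omega) z z']
    simp only [hw]
    rw [show (1 / 2 ^ (2 * (K - 1)) : ℝ) = (1 / 2 ^ (K - 1)) * (1 / 2 ^ (K - 1)) from
      ha2.symm]
    ring
  have hoffsum : 2 * ∑ z : Fin (2 ^ K), ∑ z' ∈ univ.filter (fun z' => z < z'),
        (w z * w z' / (Pmean Y z * Pmean Y z')) * rcov Nj (pObs Y Nj z) (pObs Y Nj z')
      = ((1 / 2 ^ (2 * (K - 1))) * (-(1 / (N : ℝ))))
          * ∑ z : Fin (2 ^ K), ∑ z' ∈ univ.filter (fun z' => z < z'),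
              lam ℓ z * lam ℓ z' * ((S2 Y z + S2 Y z' - S2diff Y z z')
                / (Pmean Y z * Pmean Y z')) := by
    rw [Finset.mul_sum, Finset.mul_sum]
    apply Finset.sum_congr rfl
    intro z _
    rw [Finset.mul_sum, Finset.mul_sum]
    apply Finset.sum_congr rfl
    intro z' hz'
    exact hoff z z' (Finset.mem_filter.1 hz').2
  rw [hdiag, hoffsum]
  ring
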